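/- For n ≥ 3, every induced-A₃-saturated family in B_n has size exactly 2n, i.e., isat(n, A₃) = 2n. -/

import Mathlib

/-- `F` contains `m` pairwise incomparable sets (an induced copy of the
antichain `A_m`). -/
def AntichainCopy {n : ℕ} (m : ℕ) (F : Finset (Finset (Fin n))) : Prop :=
  ∃ G ⊆ F, G.card = m ∧ IsAntichain (· ⊆ ·) (G : Set (Finset (Fin n)))

/-- `F` is induced-`A_m`-saturated in `B_n`. -/
def ASaturated {n : ℕ} (m : ℕ) (F : Finset (Finset (Fin n))) : Prop :=
  ¬ AntichainCopy m F ∧ ∀ S ∉ F, AntichainCopy m (insert S F)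

namespace Stmt9

variable {n : ℕ}

/-- Two incomparable sets. -/
def Incomp (A B : Finset (Fin n)) : Prop := ¬ A ⊆ B ∧ ¬ B ⊆ A

lemma Incomp.ne {A B : Finset (Fin n)} (h : Incomp A B) : A ≠ B := by
  rintro rfl; exact h.1 (subset_refl _)

lemma Incomp.symm {A B : Finset (Fin n)} (h : Incomp A B) : Incomp B A := ⟨h.2, h.1⟩

lemma incomp_of_card_eq {A B : Finset (Fin n)} (hne : A ≠ B) (h : A.card = B.card) :
    Incomp A B := by
  constructor
  · intro hs; exact hne (Finset.eq_of_subset_of_card_le hs h.ge)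
  · intro hs; exact hne ((Finset.eq_of_subset_of_card_le hs h.le)).symm

lemma antichain_of_card (G : Finset (Finset (Fin n))) (k : ℕ) (h : ∀ x ∈ G, x.card = k) :
    IsAntichain (· ⊆ ·) (G : Set (Finset (Fin n))) := by
  intro x hx y hy hne hxy
  exact hne (Finset.eq_of_subset_of_card_le hxy (by rw [h x hx, h y hy]))

lemma no3_iff (F : Finset (Finset (Fin n))) :
    ¬ AntichainCopy 3 F ↔
      ∀ a ∈ F, ∀ b ∈ F, ∀ c ∈ F, Incomp a b → Incomp a c → Incomp b c → False := by
  constructor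
  · intro h a ha b hb c hc hab hac hbc
    apply h
    refine ⟨{a, b, c}, ?_, ?_, ?_⟩
    · intro x hx
      simp only [Finset.mem_insert, Finset.mem_singleton] at hx
      rcases hx with rfl | rfl | rfl <;> assumption
    · rw [Finset.card_insert_of_notMem, Finset.card_insert_of_notMem,
        Finset.card_singleton]
      · simp only [Finset.mem_singleton]; exact hbc.ne
      · simp only [Finset.mem_insert, Finset.mem_singleton]
        push_neg
        exact ⟨hab.ne, hac.ne⟩
    · intro x hx y hy hne
      simp only [Finset.coe_insert, Finset.coe_singleton, Set.mem_insert_iff,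
        Set.mem_singleton_iff] at hx hy
      rcases hx with rfl | rfl | rfl <;> rcases hy with rfl | rfl | rfl <;>
        first
          | exact absurd rfl hne
          | exact hab.1 | exact hab.2 | exact hac.1 | exact hac.2
          | exact hbc.1 | exact hbc.2
  · rintro h ⟨G, hG, hG3, hanti⟩
    obtain ⟨a, b, c, hab, hac, hbc, rfl⟩ := Finset.card_eq_three.mp hG3
    have ha : a ∈ ({a, b, c} : Finset (Finset (Fin n))) := by simp
    have hb : b ∈ ({a, b, c} : Finset (Finset (Fin n))) := by simp
    have hc : c ∈ ({a, b, c} : Finset (Finset (Fin n))) := by simp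
    exact h a (hG ha) b (hG hb) c (hG hc)
      ⟨hanti (Finset.mem_coe.mpr ha) (Finset.mem_coe.mpr hb) hab,
       hanti (Finset.mem_coe.mpr hb) (Finset.mem_coe.mpr ha) hab.symm⟩
      ⟨hanti (Finset.mem_coe.mpr ha) (Finset.mem_coe.mpr hc) hac,
       hanti (Finset.mem_coe.mpr hc) (Finset.mem_coe.mpr ha) hac.symm⟩
      ⟨hanti (Finset.mem_coe.mpr hb) (Finset.mem_coe.mpr hc) hbc,
       hanti (Finset.mem_coe.mpr hc) (Finset.mem_coe.mpr hb) hbc.symm⟩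

/-- From saturation at `S ∉ F`, extract two witnesses in `F`. -/
lemma sat_extract {F : Finset (Finset (Fin n))} (hsat : ASaturated 3 F)
    {S : Finset (Fin n)} (hS : S ∉ F) :
    ∃ A ∈ F, ∃ B ∈ F, Incomp S A ∧ Incomp S B ∧ Incomp A B := by
  obtain ⟨G, hG, hG3, hanti⟩ := hsat.2 S hS
  obtain ⟨a, b, c, hab, hac, hbc, rfl⟩ := Finset.card_eq_three.mp hG3
  have ha : a ∈ ({a, b, c} : Finset (Finset (Fin n))) := by simp
  have hb : b ∈ ({a, b, c} : Finset (Finset (Fin n))) := by simp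
  have hc : c ∈ ({a, b, c} : Finset (Finset (Fin n))) := by simp
  have iab : Incomp a b :=
    ⟨hanti (Finset.mem_coe.mpr ha) (Finset.mem_coe.mpr hb) hab,
     hanti (Finset.mem_coe.mpr hb) (Finset.mem_coe.mpr ha) hab.symm⟩
  have iac : Incomp a c :=
    ⟨hanti (Finset.mem_coe.mpr ha) (Finset.mem_coe.mpr hc) hac,
     hanti (Finset.mem_coe.mpr hc) (Finset.mem_coe.mpr ha) hac.symm⟩
  have ibc : Incomp b c :=
    ⟨hanti (Finset.mem_coe.mpr hb) (Finset.mem_coe.mpr hc) hbc,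
     hanti (Finset.mem_coe.mpr hc) (Finset.mem_coe.mpr hb) hbc.symm⟩
  have hmem : ∀ x ∈ ({a, b, c} : Finset (Finset (Fin n))), x ≠ S → x ∈ F := by
    intro x hx hxS
    have := hG hx
    rcases Finset.mem_insert.mp this with rfl | h
    · exact absurd rfl hxS
    · exact h
  by_cases hSa : S = a
  · subst hSa
    exact ⟨b, hmem b hb (fun h => hab h.symm), c, hmem c hc (fun h => hac h.symm),
      iab, iac, ibc⟩
  by_cases hSb : S = b
  · subst hSb
    exact ⟨a, hmem a ha (Ne.symm hSa), c, hmem c hc (fun h => hbc h.symm),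
      iab.symm, ibc, iac⟩
  by_cases hSc : S = c
  · subst hSc
    exact ⟨a, hmem a ha (Ne.symm hSa), b, hmem b hb (Ne.symm hSb),
      iac.symm, ibc.symm, iab⟩
  · exact absurd ((no3_iff F).mp hsat.1 a (hmem a ha (Ne.symm hSa))
      b (hmem b hb (Ne.symm hSb)) c (hmem c hc (Ne.symm hSc))
      iab iac ibc) (fun h => h)

lemma chain_max {C : Finset (Finset (Fin n))}
    (hC : IsChain (· ⊆ ·) (C : Set (Finset (Fin n)))) (hne : C.Nonempty) :
    ∃ m ∈ C, ∀ x ∈ C, x ⊆ m := by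
  obtain ⟨m, hm, hmax⟩ := C.exists_maximal hne
  refine ⟨m, hm, fun x hx => ?_⟩
  rcases eq_or_ne x m with rfl | hne'
  · exact subset_refl _
  rcases hC (Finset.mem_coe.mpr hx) (Finset.mem_coe.mpr hm) hne' with h | h
  · exact h
  · exact hmax hx h

lemma chain_min {C : Finset (Finset (Fin n))}
    (hC : IsChain (· ⊆ ·) (C : Set (Finset (Fin n)))) (hne : C.Nonempty) :
    ∃ m ∈ C, ∀ x ∈ C, m ⊆ x := by
  obtain ⟨m, hm, hmin⟩ := C.exists_minimal hne
  refine ⟨m, hm, fun x hx => ?_⟩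
  rcases eq_or_ne x m with rfl | hne'
  · exact subset_refl _
  rcases hC (Finset.mem_coe.mpr hx) (Finset.mem_coe.mpr hm) hne' with h | h
  · exact hmin hx h
  · exact h

lemma chain_subset {C D : Finset (Finset (Fin n))}
    (hC : IsChain (· ⊆ ·) (C : Set (Finset (Fin n)))) (h : D ⊆ C) :
    IsChain (· ⊆ ·) (D : Set (Finset (Fin n))) :=
  hC.mono (Finset.coe_subset.mpr h)

/-- Galvin's step for width-2 Dilworth. -/
lemma galvin_step (F C D : Finset (Finset (Fin n))) (a a₁ : Finset (Fin n))
    (haF : a ∈ F) (hcov : C ∪ D = F.erase a)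
    (hC : IsChain (· ⊆ ·) (C : Set (Finset (Fin n))))
    (hD : IsChain (· ⊆ ·) (D : Set (Finset (Fin n))))
    (ha₁a : a₁ ⊆ a)
    (hmax : ∀ x ∈ C, (∃ y ∈ F.erase a, Incomp x y) → x ⊆ a₁) :
    ∃ C' D', C' ∪ D' = F ∧ IsChain (· ⊆ ·) (C' : Set (Finset (Fin n))) ∧
      IsChain (· ⊆ ·) (D' : Set (Finset (Fin n))) := by
  classical
  set K : Finset (Finset (Fin n)) := insert a (C.filter (· ⊆ a₁)) with hK
  have hKF : K ⊆ F := by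
    intro x hx
    rcases Finset.mem_insert.mp hx with rfl | hx
    · exact haF
    · have : x ∈ C := Finset.mem_of_mem_filter x hx
      have : x ∈ C ∪ D := Finset.mem_union_left _ this
      rw [hcov] at this
      exact Finset.mem_of_mem_erase this
  refine ⟨K, F \ K, Finset.union_sdiff_of_subset hKF, ?_, ?_⟩
  · -- K is a chain
    intro x hx y hy hne
    simp only [hK, Finset.coe_insert, Set.mem_insert_iff, Finset.mem_coe,
      Finset.mem_filter] at hx hy
    rcases hx with rfl | ⟨hxC, hxa₁⟩
    · rcases hy with rfl | ⟨hyC, hya₁⟩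
      · exact absurd rfl hne
      · exact Or.inr (hya₁.trans ha₁a)
    · rcases hy with rfl | ⟨hyC, hya₁⟩
      · exact Or.inl (hxa₁.trans ha₁a)
      · exact hC (Finset.mem_coe.mpr hxC) (Finset.mem_coe.mpr hyC) hne
  · -- F \ K is a chain
    intro x hx y hy hne
    by_contra hcon
    push_neg at hcon
    have hinc : Incomp x y := ⟨hcon.1, hcon.2⟩
    simp only [Finset.coe_sdiff, Set.mem_diff, Finset.mem_coe] at hx hy
    have hxK : x ∉ K := hx.2
    have hyK : y ∉ K := hy.2
    have hxa : x ≠ a := by rintro rfl; exact hxK (Finset.mem_insert_self _ _)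
    have hya : y ≠ a := by rintro rfl; exact hyK (Finset.mem_insert_self _ _)
    have hx' : x ∈ C ∪ D := by rw [hcov]; exact Finset.mem_erase.mpr ⟨hxa, hx.1⟩
    have hy' : y ∈ C ∪ D := by rw [hcov]; exact Finset.mem_erase.mpr ⟨hya, hy.1⟩
    have hyE : y ∈ F.erase a := Finset.mem_erase.mpr ⟨hya, hy.1⟩
    have hxE : x ∈ F.erase a := Finset.mem_erase.mpr ⟨hxa, hx.1⟩
    rcases Finset.mem_union.mp hx' with hxC | hxD
    · have : x ⊆ a₁ := hmax x hxC ⟨y, hyE, hinc⟩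
      exact hxK (Finset.mem_insert_of_mem (Finset.mem_filter.mpr ⟨hxC, this⟩))
    · rcases Finset.mem_union.mp hy' with hyC | hyD
      · have : y ⊆ a₁ := hmax y hyC ⟨x, hxE, hinc.symm⟩
        exact hyK (Finset.mem_insert_of_mem (Finset.mem_filter.mpr ⟨hyC, this⟩))
      · rcases hD (Finset.mem_coe.mpr hxD) (Finset.mem_coe.mpr hyD) hne with h | h
        · exact hinc.1 h
        · exact hinc.2 h

lemma galvin_not_sub (F' C D : Finset (Finset (Fin n))) (hcov : C ∪ D = F')
    (hD : IsChain (· ⊆ ·) (D : Set (Finset (Fin n))))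
    (a₁ a₂ : Finset (Fin n)) (ha₂D : a₂ ∈ D)
    (hw : ∃ y ∈ F', Incomp a₂ y)
    (hmax₁ : ∀ x ∈ C, (∃ y ∈ F', Incomp x y) → x ⊆ a₁) :
    ¬ a₁ ⊆ a₂ := by
  intro h12
  obtain ⟨y, hyF, hy⟩ := hw
  have hy' : y ∈ C ∪ D := hcov ▸ hyF
  rcases Finset.mem_union.mp hy' with hyC | hyD
  · have : y ⊆ a₁ := hmax₁ y hyC ⟨a₂, hcov ▸ Finset.mem_union_right _ ha₂D, hy.symm⟩
    exact hy.2 (this.trans h12)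
  · rcases hD (Finset.mem_coe.mpr ha₂D) (Finset.mem_coe.mpr hyD) hy.ne with h | h
    · exact hy.1 h
    · exact hy.2 h

/-- Width-2 Dilworth: no 3-antichain implies a cover by two chains. -/
lemma dilworth2 (F : Finset (Finset (Fin n)))
    (h3 : ∀ a ∈ F, ∀ b ∈ F, ∀ c ∈ F, Incomp a b → Incomp a c → Incomp b c → False) :
    ∃ C D, C ∪ D = F ∧ IsChain (· ⊆ ·) (C : Set (Finset (Fin n))) ∧
      IsChain (· ⊆ ·) (D : Set (Finset (Fin n))) := by
  classical
  induction F using Finset.strongInduction with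
  | _ F ih =>
    rcases Finset.eq_empty_or_nonempty F with rfl | hne
    · exact ⟨∅, ∅, by simp, by simp [IsChain], by simp [IsChain]⟩
    obtain ⟨a, haF, hamax⟩ := F.exists_maximal hne
    set F' := F.erase a with hF'
    have hF'ss : F' ⊂ F := Finset.erase_ssubset haF
    have h3' : ∀ x ∈ F', ∀ y ∈ F', ∀ z ∈ F', Incomp x y → Incomp x z → Incomp y z → False :=
      fun x hx y hy z hz => h3 x (Finset.mem_of_mem_erase hx) y (Finset.mem_of_mem_erase hy)
        z (Finset.mem_of_mem_erase hz)
    obtain ⟨C, D, hcov, hC, hD⟩ := ih F' hF'ss h3'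
    -- maximality: nothing in F' strictly above a
    have hup : ∀ x ∈ F', ¬ a ⊆ x := by
      intro x hx hax
      have hxa : x ≠ a := (Finset.mem_erase.mp hx).1
      exact hxa (Finset.Subset.antisymm (hamax (Finset.mem_of_mem_erase hx) hax) hax)
    by_cases hpair : ∃ x ∈ F', ∃ y ∈ F', Incomp x y
    · obtain ⟨x₀, hx₀, y₀, hy₀, hxy₀⟩ := hpair
      -- both W₁ ⊆ C and W₂ ⊆ D (elements in incomparable pairs) are nonempty
      set P : Finset (Fin n) → Prop := fun x => ∃ y ∈ F', Incomp x y with hP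
      have hPx₀ : P x₀ := ⟨y₀, hy₀, hxy₀⟩
      have hPy₀ : P y₀ := ⟨x₀, hx₀, hxy₀.symm⟩
      have hWne : (∃ w ∈ C, P w) ∧ (∃ w ∈ D, P w) := by
        have hx₀' : x₀ ∈ C ∪ D := hcov ▸ hx₀
        have hy₀' : y₀ ∈ C ∪ D := hcov ▸ hy₀
        rcases Finset.mem_union.mp hx₀' with h1 | h1 <;>
          rcases Finset.mem_union.mp hy₀' with h2 | h2
        · rcases hC (Finset.mem_coe.mpr h1) (Finset.mem_coe.mpr h2) hxy₀.ne with h | h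
          · exact absurd h hxy₀.1
          · exact absurd h hxy₀.2
        · exact ⟨⟨x₀, h1, hPx₀⟩, ⟨y₀, h2, hPy₀⟩⟩
        · exact ⟨⟨y₀, h2, hPy₀⟩, ⟨x₀, h1, hPx₀⟩⟩
        · rcases hD (Finset.mem_coe.mpr h1) (Finset.mem_coe.mpr h2) hxy₀.ne with h | h
          · exact absurd h hxy₀.1
          · exact absurd h hxy₀.2
      have hPdec : DecidablePred P := fun _ => Classical.dec _
      set W₁ := C.filter (fun x => P x) with hW₁
      set W₂ := D.filter (fun x => P x) with hW₂
      have hW₁ne : W₁.Nonempty := by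
        obtain ⟨w, hw, hPw⟩ := hWne.1; exact ⟨w, Finset.mem_filter.mpr ⟨hw, hPw⟩⟩
      have hW₂ne : W₂.Nonempty := by
        obtain ⟨w, hw, hPw⟩ := hWne.2; exact ⟨w, Finset.mem_filter.mpr ⟨hw, hPw⟩⟩
      have hW₁chain : IsChain (· ⊆ ·) (W₁ : Set (Finset (Fin n))) :=
        chain_subset hC (Finset.filter_subset _ _)
      have hW₂chain : IsChain (· ⊆ ·) (W₂ : Set (Finset (Fin n))) :=
        chain_subset hD (Finset.filter_subset _ _)
      obtain ⟨a₁, ha₁W, ha₁max⟩ := chain_max hW₁chain hW₁ne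
      obtain ⟨a₂, ha₂W, ha₂max⟩ := chain_max hW₂chain hW₂ne
      have ha₁C : a₁ ∈ C := Finset.mem_of_mem_filter _ ha₁W
      have ha₂D : a₂ ∈ D := Finset.mem_of_mem_filter _ ha₂W
      have ha₁P : P a₁ := (Finset.mem_filter.mp ha₁W).2
      have ha₂P : P a₂ := (Finset.mem_filter.mp ha₂W).2
      have hmax₁ : ∀ x ∈ C, (∃ y ∈ F', Incomp x y) → x ⊆ a₁ := by
        intro x hx hPx; exact ha₁max x (Finset.mem_filter.mpr ⟨hx, hPx⟩)
      have hmax₂ : ∀ x ∈ D, (∃ y ∈ F', Incomp x y) → x ⊆ a₂ := by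
        intro x hx hPx; exact ha₂max x (Finset.mem_filter.mpr ⟨hx, hPx⟩)
      have h12 : Incomp a₁ a₂ :=
        ⟨galvin_not_sub F' C D hcov hD a₁ a₂ ha₂D ha₂P hmax₁,
         galvin_not_sub F' D C (by rw [Finset.union_comm]; exact hcov) hC a₂ a₁ ha₁C ha₁P hmax₂⟩
      have ha₁F : a₁ ∈ F := Finset.mem_of_mem_erase (hcov ▸ Finset.mem_union_left D ha₁C)
      have ha₂F : a₂ ∈ F := Finset.mem_of_mem_erase (hcov ▸ Finset.mem_union_right C ha₂D)
      have ha₁F' : a₁ ∈ F' := hcov ▸ Finset.mem_union_left D ha₁C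
      have ha₂F' : a₂ ∈ F' := hcov ▸ Finset.mem_union_right C ha₂D
      by_cases hc1 : a₁ ⊆ a
      · exact galvin_step F C D a a₁ haF hcov hC hD hc1 hmax₁
      by_cases hc2 : a₂ ⊆ a
      · obtain ⟨C', D', h1, h2, h3⟩ := galvin_step F D C a a₂ haF
          (by rw [Finset.union_comm]; exact hcov) hD hC hc2 hmax₂
        exact ⟨C', D', h1, h2, h3⟩
      · exact absurd (h3 a haF a₁ ha₁F a₂ ha₂F ⟨hup a₁ ha₁F', hc1⟩ ⟨hup a₂ ha₂F', hc2⟩ h12)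
          (fun h => h)
    · -- F' is a chain
      push_neg at hpair
      refine ⟨{a}, F', ?_, ?_, ?_⟩
      · rw [← Finset.insert_eq, Finset.insert_erase haF]
      · simp [IsChain, Set.Pairwise]
      · intro x hx y hy hne
        by_contra hcon
        push_neg at hcon
        exact (hpair x (Finset.mem_coe.mp hx) y (Finset.mem_coe.mp hy)) ⟨hcon.1, hcon.2⟩

lemma empty_mem {F : Finset (Finset (Fin n))} (hsat : ASaturated 3 F) : ∅ ∈ F := by
  by_contra h
  obtain ⟨A, hA, B, hB, h1, _, _⟩ := sat_extract hsat h
  exact h1.1 (Finset.empty_subset _)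

lemma univ_mem {F : Finset (Finset (Fin n))} (hsat : ASaturated 3 F) :
    (Finset.univ : Finset (Fin n)) ∈ F := by
  by_contra h
  obtain ⟨A, hA, B, hB, h1, _, _⟩ := sat_extract hsat h
  exact h1.2 (Finset.subset_univ _)

/-- Sandwich: two distinct sets of size `k` between `A₁` and `A₂`. -/
lemma exists_two_between (A₁ A₂ : Finset (Fin n)) (h12 : A₁ ⊆ A₂) (k : ℕ)
    (h1 : A₁.card < k) (h2 : k < A₂.card) :
    ∃ S T : Finset (Fin n), S ≠ T ∧ (A₁ ⊆ S ∧ S ⊆ A₂ ∧ S.card = k) ∧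
      (A₁ ⊆ T ∧ T ⊆ A₂ ∧ T.card = k) := by
  classical
  have hm : (A₂ \ A₁).card = A₂.card - A₁.card := Finset.card_sdiff_of_subset h12
  set j := k - A₁.card with hj
  have hj1 : 1 ≤ j := by omega
  have hjm : j < (A₂ \ A₁).card := by omega
  obtain ⟨t, ht, htc⟩ := (A₂ \ A₁).exists_subset_card_eq hjm.le
  have hrem : ((A₂ \ A₁) \ t).Nonempty := by
    rw [← Finset.card_pos, Finset.card_sdiff_of_subset ht]; omega
  obtain ⟨e, he⟩ := hrem
  have het : e ∉ t := (Finset.mem_sdiff.mp he).2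
  have heA : e ∈ A₂ \ A₁ := (Finset.mem_sdiff.mp he).1
  obtain ⟨f, hf⟩ : t.Nonempty := by rw [← Finset.card_pos]; omega
  set t' := insert e (t.erase f) with ht'
  have ht'c : t'.card = j := by
    rw [ht', Finset.card_insert_of_notMem (fun h => het (Finset.mem_of_mem_erase h)),
      Finset.card_erase_of_mem hf, htc]
    omega
  have ht'sub : t' ⊆ A₂ \ A₁ := by
    rw [ht']
    exact Finset.insert_subset heA ((Finset.erase_subset f t).trans ht)
  have hdisj : Disjoint A₁ t := by
    refine Finset.disjoint_left.mpr (fun x hx hxt => ?_)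
    exact (Finset.mem_sdiff.mp (ht hxt)).2 hx
  have hdisj' : Disjoint A₁ t' := by
    refine Finset.disjoint_left.mpr (fun x hx hxt => ?_)
    exact (Finset.mem_sdiff.mp (ht'sub hxt)).2 hx
  refine ⟨A₁ ∪ t, A₁ ∪ t', ?_, ⟨Finset.subset_union_left, ?_, ?_⟩,
    ⟨Finset.subset_union_left, ?_, ?_⟩⟩
  · intro h
    have : e ∈ A₁ ∪ t := by
      rw [h]; exact Finset.mem_union_right _ (Finset.mem_insert_self _ _)
    rcases Finset.mem_union.mp this with h' | h'
    · exact (Finset.mem_sdiff.mp heA).2 h'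
    · exact het h'
  · exact Finset.union_subset h12 (ht.trans Finset.sdiff_subset)
  · rw [Finset.card_union_of_disjoint hdisj, htc]; omega
  · exact Finset.union_subset h12 (ht'sub.trans Finset.sdiff_subset)
  · rw [Finset.card_union_of_disjoint hdisj', ht'c]; omega

/-- If some chain `D` of a two-chain cover misses level `k`, level `k` has ≥ 2 sets. -/
lemma level_helper (F C D : Finset (Finset (Fin n))) (hcov : C ∪ D = F)
    (hC : IsChain (· ⊆ ·) (C : Set (Finset (Fin n))))
    (hD : IsChain (· ⊆ ·) (D : Set (Finset (Fin n))))
    (hsat : ASaturated 3 F) (k : ℕ) (hk1 : 1 ≤ k) (hk2 : k < n)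
    (hDk : ∀ x ∈ D, x.card ≠ k)
    (hlev : (F.filter (fun A => A.card = k)).card ≤ 1) : False := by
  classical
  set d₁ := D.filter (fun x => x.card < k) with hd₁
  set d₂ := D.filter (fun x => k < x.card) with hd₂
  have hd₁chain : IsChain (· ⊆ ·) (d₁ : Set (Finset (Fin n))) :=
    chain_subset hD (Finset.filter_subset _ _)
  have hd₂chain : IsChain (· ⊆ ·) (d₂ : Set (Finset (Fin n))) :=
    chain_subset hD (Finset.filter_subset _ _)
  -- construct A₁
  have hA₁ : ∃ A₁ : Finset (Fin n), A₁.card < k ∧ (∀ x ∈ D, x.card < k → x ⊆ A₁) ∧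
      (A₁ ∈ D ∨ A₁ = ∅) := by
    rcases Finset.eq_empty_or_nonempty d₁ with h | h
    · refine ⟨∅, by simp; omega, fun x hx hxk => ?_, Or.inr rfl⟩
      exact absurd (Finset.mem_filter.mpr ⟨hx, hxk⟩) (by rw [← hd₁, h]; simp)
    · obtain ⟨m, hm, hmax⟩ := chain_max hd₁chain h
      exact ⟨m, (Finset.mem_filter.mp hm).2, fun x hx hxk =>
        hmax x (Finset.mem_filter.mpr ⟨hx, hxk⟩), Or.inl (Finset.mem_of_mem_filter _ hm)⟩
  have hA₂ : ∃ A₂ : Finset (Fin n), k < A₂.card ∧ (∀ x ∈ D, k < x.card → A₂ ⊆ x) ∧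
      (A₂ ∈ D ∨ A₂ = Finset.univ) := by
    rcases Finset.eq_empty_or_nonempty d₂ with h | h
    · refine ⟨Finset.univ, by simpa using hk2, fun x hx hxk => ?_, Or.inr rfl⟩
      exact absurd (Finset.mem_filter.mpr ⟨hx, hxk⟩) (by rw [← hd₂, h]; simp)
    · obtain ⟨m, hm, hmin⟩ := chain_min hd₂chain h
      exact ⟨m, (Finset.mem_filter.mp hm).2, fun x hx hxk =>
        hmin x (Finset.mem_filter.mpr ⟨hx, hxk⟩), Or.inl (Finset.mem_of_mem_filter _ hm)⟩
  obtain ⟨A₁, hA₁k, hA₁max, hA₁mem⟩ := hA₁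
  obtain ⟨A₂, hA₂k, hA₂min, hA₂mem⟩ := hA₂
  have h12 : A₁ ⊆ A₂ := by
    rcases hA₁mem with h1 | rfl
    · rcases hA₂mem with h2 | rfl
      · have hne : A₁ ≠ A₂ := by
          intro h; rw [h] at hA₁k; omega
        rcases hD (Finset.mem_coe.mpr h1) (Finset.mem_coe.mpr h2) hne with h | h
        · exact h
        · exact absurd (Finset.card_le_card h) (by omega)
      · exact Finset.subset_univ _
    · exact Finset.empty_subset _
  obtain ⟨S, T, hST, ⟨hS1, hS2, hSk⟩, ⟨hT1, hT2, hTk⟩⟩ :=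
    exists_two_between A₁ A₂ h12 k hA₁k hA₂k
  -- one of S, T is not in F
  have hex : ∃ U : Finset (Fin n), A₁ ⊆ U ∧ U ⊆ A₂ ∧ U.card = k ∧ U ∉ F := by
    by_cases hSF : S ∈ F
    · by_cases hTF : T ∈ F
      · exfalso
        have : 1 < (F.filter (fun A => A.card = k)).card :=
          Finset.one_lt_card.mpr ⟨S, Finset.mem_filter.mpr ⟨hSF, hSk⟩,
            T, Finset.mem_filter.mpr ⟨hTF, hTk⟩, hST⟩
        omega
      · exact ⟨T, hT1, hT2, hTk, hTF⟩
    · exact ⟨S, hS1, hS2, hSk, hSF⟩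
  obtain ⟨U, hU1, hU2, hUk, hUF⟩ := hex
  obtain ⟨A, hAF, B, hBF, hUA, hUB, hAB⟩ := sat_extract hsat hUF
  -- every element of D is comparable to U
  have hDcomp : ∀ x ∈ D, ¬ Incomp U x := by
    intro x hx hinc
    rcases Nat.lt_or_ge x.card k with h | h
    · exact hinc.2 ((hA₁max x hx h).trans hU1)
    · have : k < x.card := lt_of_le_of_ne h (Ne.symm (hDk x hx))
      exact hinc.1 (hU2.trans (hA₂min x hx this))
  have hAC : A ∈ C := by
    rcases Finset.mem_union.mp (hcov ▸ hAF : A ∈ C ∪ D) with h | h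
    · exact h
    · exact absurd hUA (fun hi => hDcomp A h hi)
  have hBC : B ∈ C := by
    rcases Finset.mem_union.mp (hcov ▸ hBF : B ∈ C ∪ D) with h | h
    · exact h
    · exact absurd hUB (fun hi => hDcomp B h hi)
  rcases hC (Finset.mem_coe.mpr hAC) (Finset.mem_coe.mpr hBC) hAB.ne with h | h
  · exact hAB.1 h
  · exact hAB.2 h

lemma two_per_level {F : Finset (Finset (Fin n))} (hsat : ASaturated 3 F)
    {k : ℕ} (hk1 : 1 ≤ k) (hk2 : k < n) :
    2 ≤ (F.filter (fun A => A.card = k)).card := by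
  classical
  by_contra hcon
  push_neg at hcon
  have hlev : (F.filter (fun A => A.card = k)).card ≤ 1 := by omega
  obtain ⟨C, D, hcov, hC, hD⟩ := dilworth2 F ((no3_iff F).mp hsat.1)
  set D' := D \ C with hD'
  have hcov' : C ∪ D' = F := by
    rw [hD', Finset.union_sdiff_self_eq_union, hcov]
  have hD'chain : IsChain (· ⊆ ·) (D' : Set (Finset (Fin n))) :=
    chain_subset hD Finset.sdiff_subset
  by_cases hc : ∃ x ∈ C, x.card = k
  · -- D' misses level k
    obtain ⟨y, hyC, hyk⟩ := hc
    have hD'k : ∀ x ∈ D', x.card ≠ k := by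
      intro x hx hxk
      have hxC : x ∉ C := (Finset.mem_sdiff.mp hx).2
      have hxF : x ∈ F := by
        rw [← hcov']; exact Finset.mem_union_right _ hx
      have hyF : y ∈ F := by
        rw [← hcov']; exact Finset.mem_union_left _ hyC
      have hne : x ≠ y := by rintro rfl; exact hxC hyC
      have : 1 < (F.filter (fun A => A.card = k)).card :=
        Finset.one_lt_card.mpr ⟨x, Finset.mem_filter.mpr ⟨hxF, hxk⟩,
          y, Finset.mem_filter.mpr ⟨hyF, hyk⟩, hne⟩
      omega
    exact level_helper F C D' hcov' hC hD'chain hsat k hk1 hk2 hD'k hlev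
  · push_neg at hc
    exact level_helper F D' C (by rw [Finset.union_comm]; exact hcov') hD'chain hC
      hsat k hk1 hk2 hc hlev

/-- The lower bound. -/
lemma lower_bound {F : Finset (Finset (Fin n))} (hn : 3 ≤ n) (hsat : ASaturated 3 F) :
    2 * n ≤ F.card := by
  classical
  have hfib : F.card = ∑ b ∈ Finset.range (n+1), (F.filter fun A => A.card = b).card :=
    Finset.card_eq_sum_card_fiberwise (fun x _ => Finset.mem_range.mpr
      (Nat.lt_succ_of_le (by simpa using Finset.card_le_univ x)))
  rw [hfib]
  set c : ℕ → ℕ := fun b => (F.filter fun A => A.card = b).card with hcdef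
  have h0 : 1 ≤ c 0 := Finset.card_pos.mpr ⟨∅, Finset.mem_filter.mpr ⟨empty_mem hsat, rfl⟩⟩
  have hnn : 1 ≤ c n := Finset.card_pos.mpr ⟨Finset.univ, Finset.mem_filter.mpr
    ⟨univ_mem hsat, by simp⟩⟩
  have hmid : ∀ k ∈ Finset.Ico 1 n, 2 ≤ c k := by
    intro k hk
    obtain ⟨hk1, hk2⟩ := Finset.mem_Ico.mp hk
    exact two_per_level hsat hk1 hk2
  have e1 : ∑ b ∈ Finset.range (n+1), c b
      = c 0 + ((∑ b ∈ Finset.Ico 1 n, c b) + c n) := by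
    rw [Finset.range_eq_Ico, Finset.sum_Ico_succ_top (by omega : 0 ≤ n),
      Finset.sum_eq_sum_Ico_succ_bot (by omega : 0 < n)]
    simp only [Nat.zero_add]
    ring
  have e2 : 2 * (n - 1) ≤ ∑ b ∈ Finset.Ico 1 n, c b := by
    calc 2 * (n - 1) = ∑ _b ∈ Finset.Ico 1 n, 2 := by
          rw [Finset.sum_const, Nat.card_Ico]; ring
      _ ≤ ∑ b ∈ Finset.Ico 1 n, c b := Finset.sum_le_sum hmid
  rw [e1]
  omega

/-! ### The construction -/

/-- The prefix `{0, …, i-1}`. -/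
def pref (n i : ℕ) : Finset (Fin n) := Finset.univ.filter (fun j => (j : ℕ) < i)

/-- The suffix `{n-i, …, n-1}`. -/
def suff (n i : ℕ) : Finset (Fin n) := Finset.univ.filter (fun j => n - i ≤ (j : ℕ))

lemma card_pref {i : ℕ} (h : i ≤ n) : (pref n i).card = i := by
  classical
  have himg : (pref n i).image Fin.val = Finset.range i := by
    ext x
    simp only [pref, Finset.mem_image, Finset.mem_filter, Finset.mem_univ, true_and,
      Finset.mem_range]
    constructor
    · rintro ⟨j, hj, rfl⟩; exact hj
    · intro hx; exact ⟨⟨x, by omega⟩, hx, rfl⟩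
  have := Finset.card_image_of_injective (pref n i) Fin.val_injective
  rw [himg, Finset.card_range] at this
  omega

lemma card_suff {i : ℕ} (h : i ≤ n) : (suff n i).card = i := by
  classical
  have himg : (suff n i).image Fin.val = Finset.Ico (n - i) n := by
    ext x
    simp only [suff, Finset.mem_image, Finset.mem_filter, Finset.mem_univ, true_and,
      Finset.mem_Ico]
    constructor
    · rintro ⟨j, hj, rfl⟩; exact ⟨hj, j.isLt⟩
    · rintro ⟨h1, h2⟩; exact ⟨⟨x, h2⟩, h1, rfl⟩
  have := Finset.card_image_of_injective (suff n i) Fin.val_injective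
  rw [himg, Nat.card_Ico] at this
  omega

lemma pref_mono {i j : ℕ} (h : i ≤ j) : pref n i ⊆ pref n j := by
  intro x hx
  simp only [pref, Finset.mem_filter, Finset.mem_univ, true_and] at hx ⊢
  omega

lemma suff_mono {i j : ℕ} (h : i ≤ j) : suff n i ⊆ suff n j := by
  intro x hx
  simp only [suff, Finset.mem_filter, Finset.mem_univ, true_and] at hx ⊢
  omega

lemma pref_zero : pref n 0 = ∅ := by
  ext x; simp [pref]

lemma pref_n : pref n n = Finset.univ := by
  ext x; simp [pref, x.isLt]

lemma suff_zero : suff n 0 = ∅ := by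
  ext x; simp only [suff, Finset.mem_filter, Finset.mem_univ, true_and,
    Finset.notMem_empty, iff_false]
  have := x.isLt; omega

lemma suff_n : suff n n = Finset.univ := by
  ext x; simp [suff]

/-- The saturating family: all prefixes and all suffixes. -/
def conF (n : ℕ) : Finset (Finset (Fin n)) :=
  ((Finset.range (n+1)).image (pref n)) ∪ ((Finset.range (n+1)).image (suff n))

lemma zero_mem_pref {k : ℕ} (hn : 0 < n) (hk : 0 < k) : (⟨0, hn⟩ : Fin n) ∈ pref n k := by
  simp [pref, hk]

lemma zero_not_mem_suff {k : ℕ} (hn : 0 < n) (hk : k < n) :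
    (⟨0, hn⟩ : Fin n) ∉ suff n k := by
  simp only [suff, Finset.mem_filter, Finset.mem_univ, true_and]
  omega

lemma pref_ne_suff {k : ℕ} (hn : 0 < n) (hk1 : 0 < k) (hk2 : k < n) :
    pref n k ≠ suff n k := by
  intro h
  exact zero_not_mem_suff hn hk2 (h ▸ zero_mem_pref hn hk1)

lemma conF_chains :
    (∀ x ∈ (Finset.range (n+1)).image (pref n), ∀ y ∈ (Finset.range (n+1)).image (pref n),
      x ⊆ y ∨ y ⊆ x) ∧
    (∀ x ∈ (Finset.range (n+1)).image (suff n), ∀ y ∈ (Finset.range (n+1)).image (suff n),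
      x ⊆ y ∨ y ⊆ x) := by
  constructor
  · intro x hx y hy
    obtain ⟨i, _, rfl⟩ := Finset.mem_image.mp hx
    obtain ⟨j, _, rfl⟩ := Finset.mem_image.mp hy
    rcases le_total i j with h | h
    · exact Or.inl (pref_mono h)
    · exact Or.inr (pref_mono h)
  · intro x hx y hy
    obtain ⟨i, _, rfl⟩ := Finset.mem_image.mp hx
    obtain ⟨j, _, rfl⟩ := Finset.mem_image.mp hy
    rcases le_total i j with h | h
    · exact Or.inl (suff_mono h)
    · exact Or.inr (suff_mono h)

lemma conF_no3 : ¬ AntichainCopy 3 (conF n) := by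
  rw [no3_iff]
  intro a ha b hb c hc hab hac hbc
  obtain ⟨hCc, hDc⟩ := conF_chains (n := n)
  rcases Finset.mem_union.mp ha with ha' | ha' <;>
    rcases Finset.mem_union.mp hb with hb' | hb' <;>
      rcases Finset.mem_union.mp hc with hc' | hc'
  · rcases hCc a ha' b hb' with h | h; exacts [hab.1 h, hab.2 h]
  · rcases hCc a ha' b hb' with h | h; exacts [hab.1 h, hab.2 h]
  · rcases hCc a ha' c hc' with h | h; exacts [hac.1 h, hac.2 h]
  · rcases hDc b hb' c hc' with h | h; exacts [hbc.1 h, hbc.2 h]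
  · rcases hCc b hb' c hc' with h | h; exacts [hbc.1 h, hbc.2 h]
  · rcases hDc a ha' c hc' with h | h; exacts [hac.1 h, hac.2 h]
  · rcases hDc a ha' b hb' with h | h; exacts [hab.1 h, hab.2 h]
  · rcases hDc a ha' b hb' with h | h; exacts [hab.1 h, hab.2 h]

lemma pref_mem_conF {i : ℕ} (h : i ≤ n+1-1) : pref n i ∈ conF n :=
  Finset.mem_union_left _ (Finset.mem_image.mpr ⟨i, Finset.mem_range.mpr (by omega), rfl⟩)

lemma suff_mem_conF {i : ℕ} (h : i ≤ n+1-1) : suff n i ∈ conF n :=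
  Finset.mem_union_right _ (Finset.mem_image.mpr ⟨i, Finset.mem_range.mpr (by omega), rfl⟩)

lemma conF_sat (hn : 3 ≤ n) : ASaturated 3 (conF n) := by
  refine ⟨conF_no3, fun S hS => ?_⟩
  have hkn : S.card ≤ n := by simpa using Finset.card_le_univ S
  have hk0 : S.card ≠ 0 := by
    intro h
    rw [Finset.card_eq_zero] at h
    subst h
    exact hS (by rw [← pref_zero]; exact pref_mem_conF (by omega))
  have hkn' : S.card ≠ n := by
    intro h
    have hSu : S = Finset.univ :=
      Finset.eq_of_subset_of_card_le (Finset.subset_univ S) (by simp [h])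
    subst hSu
    exact hS (by rw [← pref_n]; exact pref_mem_conF (by omega))
  set k := S.card with hk
  have hP : (pref n k).card = k := card_pref (by omega)
  have hQ : (suff n k).card = k := card_suff (by omega)
  have hSP : S ≠ pref n k := fun h => hS (h ▸ pref_mem_conF (by omega))
  have hSQ : S ≠ suff n k := fun h => hS (h ▸ suff_mem_conF (by omega))
  have hPQ : pref n k ≠ suff n k := pref_ne_suff (by omega) (by omega) (by omega)
  refine ⟨{S, pref n k, suff n k}, ?_, ?_, ?_⟩
  · intro x hx
    simp only [Finset.mem_insert, Finset.mem_singleton] at hx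
    rcases hx with rfl | rfl | rfl
    · exact Finset.mem_insert_self _ _
    · exact Finset.mem_insert_of_mem (pref_mem_conF (by omega))
    · exact Finset.mem_insert_of_mem (suff_mem_conF (by omega))
  · rw [Finset.card_insert_of_notMem, Finset.card_insert_of_notMem,
      Finset.card_singleton]
    · simp only [Finset.mem_singleton]; exact hPQ
    · simp only [Finset.mem_insert, Finset.mem_singleton]
      push_neg
      exact ⟨hSP, hSQ⟩
  · apply antichain_of_card _ k
    intro x hx
    simp only [Finset.mem_insert, Finset.mem_singleton] at hx
    rcases hx with rfl | rfl | rfl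
    · rfl
    · exact hP
    · exact hQ

lemma conF_card (hn : 3 ≤ n) : (conF n).card = 2 * n := by
  classical
  haveI : Nonempty (Fin n) := ⟨⟨0, by omega⟩⟩
  set C := (Finset.range (n+1)).image (pref n) with hCdef
  set D := (Finset.range (n+1)).image (suff n) with hDdef
  have hCcard : C.card = n + 1 := by
    rw [hCdef, Finset.card_image_of_injOn, Finset.card_range]
    intro i hi j hj hij
    simp only [Finset.coe_range, Set.mem_Iio] at hi hj
    have h' : (pref n i).card = (pref n j).card := by rw [hij]
    rwa [card_pref (by omega), card_pref (by omega)] at h'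
  have hDcard : D.card = n + 1 := by
    rw [hDdef, Finset.card_image_of_injOn, Finset.card_range]
    intro i hi j hj hij
    simp only [Finset.coe_range, Set.mem_Iio] at hi hj
    have h' : (suff n i).card = (suff n j).card := by rw [hij]
    rwa [card_suff (by omega), card_suff (by omega)] at h'
  have hinter : C ∩ D = {∅, Finset.univ} := by
    ext x
    simp only [Finset.mem_inter, Finset.mem_insert, Finset.mem_singleton]
    constructor
    · rintro ⟨hxC, hxD⟩
      obtain ⟨i, hi, rfl⟩ := Finset.mem_image.mp hxC
      obtain ⟨j, hj, hji⟩ := Finset.mem_image.mp hxD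
      simp only [Finset.mem_range] at hi hj
      have hij : j = i := by
        have h' := congrArg Finset.card hji
        rwa [card_suff (by omega), card_pref (by omega)] at h'
      subst hij
      rcases Nat.eq_zero_or_pos j with h0 | h0
      · subst h0; left; rw [pref_zero]
      rcases eq_or_lt_of_le (show j ≤ n by omega) with hjn | hjn
      · subst hjn; right; rw [pref_n]
      · exact absurd hji.symm (pref_ne_suff (by omega) h0 hjn)
    · rintro (rfl | rfl)
      · refine ⟨Finset.mem_image.mpr ⟨0, Finset.mem_range.mpr (by omega), pref_zero⟩,
          Finset.mem_image.mpr ⟨0, Finset.mem_range.mpr (by omega), suff_zero⟩⟩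
      · refine ⟨Finset.mem_image.mpr ⟨n, Finset.mem_range.mpr (by omega), pref_n⟩,
          Finset.mem_image.mpr ⟨n, Finset.mem_range.mpr (by omega), suff_n⟩⟩
  have hintercard : (C ∩ D).card = 2 := by
    rw [hinter, Finset.card_insert_of_notMem, Finset.card_singleton]
    simp only [Finset.mem_singleton]
    exact fun h => (Finset.univ_nonempty (α := Fin n)).ne_empty h.symm
  have hsum := Finset.card_union_add_card_inter C D
  have hconF : conF n = C ∪ D := rfl
  rw [hconF]
  omega

end Stmt9

theorem stmt9 {n : ℕ} (hn : 3 ≤ n) :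
    IsLeast {m | ∃ F : Finset (Finset (Fin n)), ASaturated 3 F ∧ F.card = m} (2 * n) := by
  constructor
  · exact ⟨Stmt9.conF n, Stmt9.conF_sat hn, Stmt9.conF_card hn⟩
  · rintro m ⟨F, hsat, rfl⟩
    exact Stmt9.lower_bound hn hsat
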